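/- Let X be a real Banach space, κ an uncountable regular cardinal, and {x_α}_{α<κ} a dispersed sequence in X. If Z ⊆ X* is a norming subspace such that {x_α}_{α<κ} is σ(X,Z)-null, then there is a strictly increasing map σ ↦ α_σ from κ to κ such that {x_{α_σ}}_{σ<κ} is a transfinite basic sequence; if moreover Z is 1-norming, the subsequence can be chosen so that {x_{α_σ}}_{σ<κ} is a monotone transfinite basic sequence. -/

import Mathlib

open Cardinal Ordinal Set Pointwise

universe u

noncomputable def closedSpan {X : Type u} [SeminormedAddCommGroup X] [NormedSpace ℝ X]
    (s : Set X) : Submodule ℝ X :=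
  (Submodule.span ℝ s).topologicalClosure

def IsDispersed {X : Type u} [SeminormedAddCommGroup X] [NormedSpace ℝ X]
    (x : Ordinal.{u} → X) (lam : Ordinal.{u}) : Prop :=
  ∀ β < lam,
    (⋂ γ ∈ Set.Iio lam, (closedSpan (x '' {α | γ < α ∧ α < lam}) : Set X)) ⊂
      (closedSpan (x '' {α | β < α ∧ α < lam}) : Set X)

/-- transfinite basic sequence with constant C -/
def IsBasicSeqWithConst {X : Type u} [SeminormedAddCommGroup X] [NormedSpace ℝ X]
    (x : Ordinal.{u} → X) (θ : Ordinal.{u}) (C : ℝ) : Prop :=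
  1 ≤ C ∧ (∀ α < θ, x α ≠ 0) ∧
  ∀ lam < θ, ∀ y ∈ closedSpan (x '' {α | α < lam}),
    ∀ z ∈ closedSpan (x '' {α | lam ≤ α ∧ α < θ}), ‖y‖ ≤ C * ‖y + z‖

/-- `Z ⊆ X*` is an `r`-norming subspace:
`inf_{x ∈ S_X} sup_{f ∈ Z, ‖f‖ ≤ 1} f(x) ≥ r`. -/
def IsRNorming {X : Type u} [SeminormedAddCommGroup X] [NormedSpace ℝ X]
    (Z : Submodule ℝ (X →L[ℝ] ℝ)) (r : ℝ) : Prop :=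
  ∀ x : X, ‖x‖ = 1 → ∀ ε > (0:ℝ), ∃ f ∈ Z, ‖f‖ ≤ 1 ∧ r - ε < f x

/-- the sequence is `σ(X,Z)`-null -/
def IsSigmaNull {X : Type u} [SeminormedAddCommGroup X] [NormedSpace ℝ X]
    (Z : Submodule ℝ (X →L[ℝ] ℝ)) (x : Ordinal.{u} → X) (θ : Ordinal.{u}) : Prop :=
  ∀ f ∈ Z, ∀ ε > (0:ℝ), ∃ β < θ, ∀ α, β < α → α < θ → |f (x α)| < ε

variable {X : Type u} [NormedAddCommGroup X] [NormedSpace ℝ X]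

/-- finite rational combinations of elements of `S` -/
def ratCombos (S : Set X) : Set X :=
  {v | ∃ l : List (ℚ × X), (∀ p ∈ l, p.2 ∈ S) ∧ (l.map (fun p => (p.1 : ℝ) • p.2)).sum = v}

lemma ratCombos_mono {S T : Set X} (h : S ⊆ T) : ratCombos S ⊆ ratCombos T := by
  rintro v ⟨l, hl, rfl⟩
  exact ⟨l, fun p hp => h (hl p hp), rfl⟩

lemma subset_ratCombos (S : Set X) : S ⊆ ratCombos S := by
  intro v hv
  refine ⟨[(1, v)], by simpa using hv, by simp⟩

lemma zero_mem_ratCombos (S : Set X) : (0 : X) ∈ ratCombos S := ⟨[], by simp, by simp⟩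

lemma add_mem_ratCombos {S : Set X} {a b : X} (ha : a ∈ ratCombos S) (hb : b ∈ ratCombos S) :
    a + b ∈ ratCombos S := by
  obtain ⟨l, hl, rfl⟩ := ha
  obtain ⟨m, hm, rfl⟩ := hb
  refine ⟨l ++ m, ?_, by simp⟩
  intro p hp
  rcases List.mem_append.1 hp with h | h
  · exact hl p h
  · exact hm p h

lemma ratSmul_mem_ratCombos {S : Set X} {a : X} (q : ℚ) (ha : a ∈ ratCombos S) :
    (q : ℝ) • a ∈ ratCombos S := by
  obtain ⟨l, hl, rfl⟩ := ha
  refine ⟨l.map (fun p => (q * p.1, p.2)), ?_, ?_⟩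
  · intro p hp
    obtain ⟨p', hp', rfl⟩ := List.mem_map.1 hp
    exact hl p' hp'
  · induction l with
    | nil => simp
    | cons p l ih =>
      simp only [List.map_cons, List.sum_cons, smul_add, List.mem_cons] at *
      rw [ih (fun p hp => hl p (Or.inr hp))]
      congr 1
      push_cast
      rw [mul_smul]

lemma smul_mem_closure_ratCombos {S : Set X} (t : ℝ) {a : X}
    (ha : a ∈ closure (ratCombos S)) : t • a ∈ closure (ratCombos S) := by
  have step1 : ∀ b ∈ ratCombos S, ∀ s : ℝ, s • b ∈ closure (ratCombos S) := by
    intro b hb s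
    have hclosed : IsClosed {s : ℝ | s • b ∈ closure (ratCombos S)} :=
      IsClosed.preimage (continuous_id.smul continuous_const) isClosed_closure
    have hsub : Set.range ((↑) : ℚ → ℝ) ⊆ {s : ℝ | s • b ∈ closure (ratCombos S)} := by
      rintro _ ⟨q, rfl⟩; exact subset_closure (ratSmul_mem_ratCombos q hb)
    have hs : s ∈ closure (Set.range ((↑) : ℚ → ℝ)) := by
      rw [(Rat.denseRange_cast (𝕜 := ℝ)).closure_eq]; trivial
    exact hclosed.closure_subset_iff.2 hsub hs
  have hclosed : IsClosed {b : X | t • b ∈ closure (ratCombos S)} :=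
    IsClosed.preimage (continuous_const_smul t) isClosed_closure
  exact hclosed.closure_subset_iff.2 (fun b hb => step1 b hb t) ha

/-- the closure of the rational combinations, as a submodule -/
noncomputable def ratComboClosure (S : Set X) : Submodule ℝ X where
  carrier := closure (ratCombos S)
  zero_mem' := subset_closure (zero_mem_ratCombos S)
  add_mem' := by
    intro a b ha hb
    let AM : AddSubmonoid X :=
      { carrier := ratCombos S
        zero_mem' := zero_mem_ratCombos S
        add_mem' := add_mem_ratCombos }
    have := AM.topologicalClosure.add_mem (show a ∈ AM.topologicalClosure from ha)
      (show b ∈ AM.topologicalClosure from hb)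
    exact this
  smul_mem' := fun t a ha => smul_mem_closure_ratCombos t ha

lemma closedSpan_le_ratComboClosure (S : Set X) :
    closedSpan S ≤ ratComboClosure S := by
  apply Submodule.topologicalClosure_minimal
  · rw [Submodule.span_le]
    exact fun v hv => subset_closure (subset_ratCombos S hv)
  · exact isClosed_closure

lemma nonzero_cofinal {κ : Cardinal.{u}} (x : Ordinal.{u} → X)
    (hdisp : IsDispersed x κ.ord) {β : Ordinal.{u}} (hβ : β < κ.ord) :
    ∃ α, β < α ∧ α < κ.ord ∧ x α ≠ 0 := by
  by_contra h
  push_neg at h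
  obtain ⟨hsub, hne⟩ := hdisp β hβ
  apply hne
  intro v hv
  have hS : (closedSpan (x '' {α | β < α ∧ α < κ.ord}) : Set X) ⊆ {0} := by
    have h1 : Submodule.span ℝ (x '' {α | β < α ∧ α < κ.ord}) ≤ ⊥ := by
      rw [Submodule.span_le]
      rintro _ ⟨α, ⟨hα1, hα2⟩, rfl⟩
      simp [h α hα1 hα2]
    have h2 : closedSpan (x '' {α | β < α ∧ α < κ.ord}) ≤ ⊥ :=
      Submodule.topologicalClosure_minimal _ h1 (by
        have : ((⊥ : Submodule ℝ X) : Set X) = {0} := Submodule.bot_coe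
        rw [this]; exact isClosed_singleton)
    intro w hw
    simpa using h2 hw
  have hv0 : v = 0 := hS hv
  subst hv0
  simp only [Set.mem_iInter]
  intro γ _
  exact (closedSpan _).zero_mem


lemma mk_ratCombos_lt {κ : Cardinal.{u}} (hunc : ℵ₀ < κ) {S : Set X} (hS : #S < κ) :
    #(ratCombos S) < κ := by
  classical
  set f : List (ℚ × S) → X := fun l => (l.map fun p => (↑(p.1) : ℝ) • (p.2.1 : X)).sum with hf
  have hsub : ratCombos S ⊆ Set.range f := by
    rintro _ ⟨l, hl, rfl⟩
    induction l with
    | nil => exact ⟨[], by simp [hf]⟩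
    | cons p l ih =>
      obtain ⟨m, hm⟩ := ih (fun q hq => hl q (List.mem_cons_of_mem p hq))
      refine ⟨(p.1, ⟨p.2, hl p List.mem_cons_self⟩) :: m, ?_⟩
      simp only [hf, List.map_cons, List.sum_cons] at hm ⊢
      rw [hm]
  have h1 : #(ratCombos S) ≤ #(List (ℚ × S)) :=
    le_trans (Cardinal.mk_le_mk_of_subset hsub) Cardinal.mk_range_le
  have h2 : #(List (ℚ × S)) ≤ ℵ₀ ⊔ #(ℚ × S) := Cardinal.mk_list_le_max _
  have h3 : #(ℚ × S) < κ := by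
    rw [Cardinal.mk_prod]
    have hq : Cardinal.lift.{u,0} #ℚ = ℵ₀ := by simp
    have hs' : Cardinal.lift.{0,u} #S = #S := by simp
    rw [hq, hs']
    exact Cardinal.mul_lt_of_lt hunc.le hunc hS
  exact h1.trans_lt (h2.trans_lt (max_lt hunc h3))


section Constr

variable (Z : Submodule ℝ (X →L[ℝ] ℝ)) {r : ℝ}

lemma norm_inv_smul_norm {v : X} (h : v ≠ 0) : ‖‖v‖⁻¹ • v‖ = 1 := by
  rw [norm_smul, norm_inv, norm_norm, inv_mul_cancel₀ (norm_ne_zero_iff.2 h)]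

open Classical in
/-- a nearly-norming functional for `v` with tolerance `1/(n+1)` -/
noncomputable def FNorm (hr : IsRNorming Z r) (v : X) (n : ℕ) : X →L[ℝ] ℝ :=
  if h : v = 0 then 0
  else (hr (‖v‖⁻¹ • v) (norm_inv_smul_norm h) (1/(n+1)) (by positivity)).choose

lemma FNorm_spec (hr : IsRNorming Z r) (v : X) (n : ℕ) :
    FNorm Z hr v n ∈ Z ∧ ‖FNorm Z hr v n‖ ≤ 1 ∧
      (v ≠ 0 → (r - 1/(n+1)) * ‖v‖ < FNorm Z hr v n v) := by
  classical
  unfold FNorm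
  split_ifs with h
  · exact ⟨Z.zero_mem, by simp, fun h' => absurd h h'⟩
  · obtain ⟨hmem, hnorm, hval⟩ :=
      (hr (‖v‖⁻¹ • v) (norm_inv_smul_norm h) (1/(n+1)) (by positivity)).choose_spec
    refine ⟨hmem, hnorm, fun _ => ?_⟩
    set f := (hr (‖v‖⁻¹ • v) (norm_inv_smul_norm h) (1/(n+1)) (by positivity)).choose
    have hv : (0:ℝ) < ‖v‖ := norm_pos_iff.2 h
    have hval' : r - 1/(n+1) < ‖v‖⁻¹ * f v := by
      rwa [f.map_smul, _root_.smul_eq_mul] at hval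
    calc (r - 1/(n+1)) * ‖v‖ < (‖v‖⁻¹ * f v) * ‖v‖ := by
          exact mul_lt_mul_of_pos_right hval' hv
      _ = f v := by field_simp

variable {κ : Cardinal.{u}} {x : Ordinal.{u} → X}

open Classical in
/-- an ordinal beyond which `|f (x α)| < 1/(n+1)` -/
noncomputable def BOrd (hnull : IsSigmaNull Z x κ.ord) (f : X →L[ℝ] ℝ) (n : ℕ) :
    Ordinal.{u} :=
  if h : f ∈ Z then (hnull f h (1/(n+1)) (by positivity)).choose else 0

lemma BOrd_spec (hnull : IsSigmaNull Z x κ.ord) {f : X →L[ℝ] ℝ} (hf : f ∈ Z) (n : ℕ) :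
    BOrd Z hnull f n < κ.ord ∧
      ∀ α, BOrd Z hnull f n < α → α < κ.ord → |f (x α)| < 1/(n+1) := by
  classical
  unfold BOrd
  rw [dif_pos hf]
  exact (hnull f hf (1/(n+1)) (by positivity)).choose_spec

/-- the recursively selected subsequence -/
noncomputable def nextIdx (hnull : IsSigmaNull Z x κ.ord) (hr : IsRNorming Z r) :
    Ordinal.{u} → Ordinal.{u} :=
  Ordinal.lt_wf.fix (fun σ rec => sInf {θ | θ < κ.ord ∧ x θ ≠ 0 ∧
    (∀ τ (h : τ < σ), rec τ h < θ) ∧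
    ∀ v ∈ ratCombos (x '' {w | ∃ τ, ∃ _ : τ < σ, rec τ ‹_› = w}), ∀ n : ℕ,
      BOrd Z hnull (FNorm Z hr v n) n < θ})

variable (hnull : IsSigmaNull Z x κ.ord) (hr : IsRNorming Z r)

/-- the "good" set at stage σ -/
def goodSet (σ : Ordinal.{u}) : Set Ordinal.{u} :=
  {θ | θ < κ.ord ∧ x θ ≠ 0 ∧
    (∀ τ < σ, nextIdx Z hnull hr τ < θ) ∧
    ∀ v ∈ ratCombos (x '' (nextIdx Z hnull hr '' Iio σ)), ∀ n : ℕ,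
      BOrd Z hnull (FNorm Z hr v n) n < θ}

lemma nextIdx_eq (σ : Ordinal.{u}) :
    nextIdx Z hnull hr σ = sInf (goodSet Z hnull hr σ) := by
  show Ordinal.lt_wf.fix _ σ = _
  rw [WellFounded.fix_eq]
  congr 1
  unfold goodSet
  have himg : {w | ∃ τ, ∃ _ : τ < σ, nextIdx Z hnull hr τ = w}
      = nextIdx Z hnull hr '' Iio σ := by
    ext w
    simp [Set.mem_image]
  rw [← himg]
  rfl

lemma nextIdx_good (hreg : κ.IsRegular) (hunc : ℵ₀ < κ) (hdisp : IsDispersed x κ.ord) :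
    ∀ σ < κ.ord, nextIdx Z hnull hr σ ∈ goodSet Z hnull hr σ := by
  intro σ
  induction σ using Ordinal.induction with
  | _ σ IH =>
  intro hσ
  have hlim : Order.IsSuccLimit κ.ord := Cardinal.isSuccLimit_ord hreg.aleph0_le
  set A := nextIdx Z hnull hr with hA
  -- cardinality of the image set
  have hcard : #(x '' (A '' Iio σ)) < κ := by
    have himg : x '' (A '' Iio σ)
        = Set.range (fun i : σ.ToType => x (A (((Ordinal.ToType.mk (o := σ))).symm i).1)) := by
      ext w
      constructor
      · rintro ⟨_, ⟨τ, hτ, rfl⟩, rfl⟩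
        exact ⟨(Ordinal.ToType.mk (o := σ)) ⟨τ, hτ⟩, by simp⟩
      · rintro ⟨i, rfl⟩
        exact ⟨A (((Ordinal.ToType.mk (o := σ))).symm i).1,
          ⟨(((Ordinal.ToType.mk (o := σ))).symm i).1, (((Ordinal.ToType.mk (o := σ))).symm i).2, rfl⟩, rfl⟩
    rw [himg]
    refine Cardinal.mk_range_le.trans_lt ?_
    rw [Cardinal.mk_toType]
    exact Cardinal.lt_ord.1 hσ
  have hrc : #(ratCombos (x '' (A '' Iio σ))) < κ := mk_ratCombos_lt hunc hcard
  -- bound on previously chosen indices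
  have hb1 : Ordinal.bsup.{u,u} σ (fun τ _ => A τ + 1) < κ.ord := by
    refine Ordinal.bsup_lt_ord ?_ ?_
    · rw [hreg.cof_eq]; exact Cardinal.lt_ord.1 hσ
    · intro τ hτ
      have : A τ < κ.ord := (IH τ hτ (hτ.trans hσ)).1
      rw [Ordinal.add_one_eq_succ]
      exact hlim.succ_lt this
  -- bound on the demanded tail ordinals
  set R := ratCombos (x '' (A '' Iio σ)) with hR
  have hb2 : iSup (fun p : R × ℕ => BOrd Z hnull (FNorm Z hr p.1.1 p.2) p.2 + 1) < κ.ord := by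
    refine Ordinal.iSup_lt_ord ?_ ?_
    · rw [hreg.cof_eq, Cardinal.mk_prod, Cardinal.lift_id']
      have : Cardinal.lift.{u,0} #ℕ = ℵ₀ := by simp
      rw [this]
      exact Cardinal.mul_lt_of_lt hunc.le hrc hunc
    · rintro ⟨v, n⟩
      have hfz : FNorm Z hr v.1 n ∈ Z := (FNorm_spec Z hr v.1 n).1
      have : BOrd Z hnull (FNorm Z hr v.1 n) n < κ.ord := (BOrd_spec Z hnull hfz n).1
      rw [Ordinal.add_one_eq_succ]
      exact hlim.succ_lt this
  obtain ⟨θ, hbθ, hθκ, hθ0⟩ := nonzero_cofinal x hdisp (max_lt hb1 hb2)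
  have hθgood : θ ∈ goodSet Z hnull hr σ := by
    refine ⟨hθκ, hθ0, ?_, ?_⟩
    · intro τ hτ
      have h1 : A τ + 1 ≤ Ordinal.bsup.{u,u} σ (fun τ _ => A τ + 1) :=
        Ordinal.le_bsup _ τ hτ
      have h2 : A τ < A τ + 1 := by
        rw [Ordinal.add_one_eq_succ]; exact Order.lt_succ _
      exact h2.trans_le (h1.trans ((le_max_left _ _).trans hbθ.le))
    · intro v hv n
      have h1 : BOrd Z hnull (FNorm Z hr v n) n + 1
          ≤ iSup (fun p : R × ℕ => BOrd Z hnull (FNorm Z hr p.1.1 p.2) p.2 + 1) :=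
        Ordinal.le_iSup _ (⟨⟨v, hv⟩, n⟩ : R × ℕ)
      have h2 : BOrd Z hnull (FNorm Z hr v n) n < BOrd Z hnull (FNorm Z hr v n) n + 1 := by
        rw [Ordinal.add_one_eq_succ]; exact Order.lt_succ _
      exact h2.trans_le (h1.trans ((le_max_right _ _).trans hbθ.le))
  rw [hA, nextIdx_eq]
  exact csInf_mem ⟨θ, hθgood⟩

lemma key_estimate (hreg : κ.IsRegular) (hunc : ℵ₀ < κ) (hdisp : IsDispersed x κ.ord)
    {lam : Ordinal.{u}} (hlam : lam < κ.ord) {v z : X}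
    (hv : v ∈ ratCombos (x '' (nextIdx Z hnull hr '' Iio lam)))
    (hz : z ∈ Submodule.span ℝ
      (x '' (nextIdx Z hnull hr '' {σ | lam ≤ σ ∧ σ < κ.ord}))) :
    r * ‖v‖ ≤ ‖v + z‖ := by
  set A := nextIdx Z hnull hr with hA
  rcases eq_or_ne v 0 with rfl | hv0
  · simpa using norm_nonneg z
  obtain ⟨k, c, w, hwsum⟩ := Submodule.mem_span_set'.1 hz
  set T := ∑ i, |c i| with hT
  have hT0 : 0 ≤ T := Finset.sum_nonneg (fun i _ => abs_nonneg _)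
  apply le_of_forall_pos_le_add
  intro ε hε
  obtain ⟨n, hn⟩ := exists_nat_gt ((‖v‖ + T) / ε)
  set s : ℝ := 1/(n+1) with hs
  have hs0 : (0:ℝ) < s := by positivity
  set f := FNorm Z hr v n with hf
  obtain ⟨hfZ, hf1, hfv⟩ := FNorm_spec Z hr v n
  have hfv' : (r - s) * ‖v‖ < f v := hfv hv0
  -- smallness of f on the support of z
  have hsmall : ∀ i : Fin k, |f (w i).1| < s := by
    intro i
    obtain ⟨a, ⟨σi, ⟨hσ1, hσ2⟩, rfl⟩, hxi⟩ := (w i).2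
    have hvin : v ∈ ratCombos (x '' (A '' Iio σi)) :=
      ratCombos_mono (Set.image_mono (Set.image_mono (fun τ hτ => lt_of_lt_of_le hτ hσ1))) hv
    have hgood := nextIdx_good Z hnull hr hreg hunc hdisp σi hσ2
    have hBlt : BOrd Z hnull f n < A σi := hgood.2.2.2 v hvin n
    have hres := (BOrd_spec Z hnull hfZ n).2 (A σi) hBlt hgood.1
    rw [hxi] at hres
    exact hres
  have hfzbd : |f z| ≤ T * s := by
    rw [← hwsum, map_sum]
    calc |∑ i, f (c i • (w i).1)| ≤ ∑ i, |f (c i • (w i).1)| :=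
          Finset.abs_sum_le_sum_abs _ _
      _ ≤ ∑ i, |c i| * s := by
          refine Finset.sum_le_sum (fun i _ => ?_)
          rw [map_smul, _root_.smul_eq_mul, abs_mul]
          exact mul_le_mul_of_nonneg_left (hsmall i).le (abs_nonneg _)
      _ = T * s := by rw [hT, Finset.sum_mul]
  have hup : f (v + z) ≤ ‖v + z‖ := by
    calc f (v + z) ≤ |f (v + z)| := le_abs_self _
      _ = ‖f (v + z)‖ := (Real.norm_eq_abs _).symm
      _ ≤ ‖f‖ * ‖v + z‖ := f.le_opNorm _
      _ ≤ 1 * ‖v + z‖ := mul_le_mul_of_nonneg_right hf1 (norm_nonneg _)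
      _ = ‖v + z‖ := one_mul _
  have hlow : (r - s) * ‖v‖ - T * s < f (v + z) := by
    rw [map_add]
    have : -(T * s) ≤ f z := neg_le_of_abs_le hfzbd
    linarith
  have hεb : (‖v‖ + T) * s < ε := by
    have h1 : ‖v‖ + T < ε * n := by
      rw [div_lt_iff₀ hε] at hn
      linarith [hn]
    have h2 : ε * n < ε * (n + 1) := by nlinarith
    rw [hs]
    rw [mul_one_div, div_lt_iff₀ (by positivity : (0:ℝ) < (n:ℝ)+1)]
    nlinarith
  have hexp : (r - s) * ‖v‖ = r * ‖v‖ - s * ‖v‖ := by ring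
  have hexp2 : (‖v‖ + T) * s = s * ‖v‖ + T * s := by ring
  linarith

include hnull hr in
lemma master (hreg : κ.IsRegular) (hunc : ℵ₀ < κ) (hdisp : IsDispersed x κ.ord) :
    ∃ φ : Ordinal.{u} → Ordinal.{u}, StrictMonoOn φ (Set.Iio κ.ord) ∧
      (∀ σ < κ.ord, φ σ < κ.ord) ∧ (∀ σ < κ.ord, x (φ σ) ≠ 0) ∧
      ∀ lam < κ.ord, ∀ y ∈ closedSpan ((fun σ => x (φ σ)) '' {α | α < lam}),
        ∀ z ∈ closedSpan ((fun σ => x (φ σ)) '' {α | lam ≤ α ∧ α < κ.ord}),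
          r * ‖y‖ ≤ ‖y + z‖ := by
  set A := nextIdx Z hnull hr with hA
  have hgood := nextIdx_good Z hnull hr hreg hunc hdisp
  refine ⟨A, ?_, ?_, ?_, ?_⟩
  · intro τ _ σ hσ hlt
    exact (hgood σ hσ).2.2.1 τ hlt
  · intro σ hσ; exact (hgood σ hσ).1
  · intro σ hσ; exact (hgood σ hσ).2.1
  · intro lam hlam y hy z hz
    have himg1 : (fun σ => x (A σ)) '' {α | α < lam} = x '' (A '' Iio lam) := by
      rw [Set.image_image]; rfl
    have himg2 : (fun σ => x (A σ)) '' {α | lam ≤ α ∧ α < κ.ord}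
        = x '' (A '' {σ | lam ≤ σ ∧ σ < κ.ord}) := by
      rw [Set.image_image]
    rw [himg1] at hy
    rw [himg2] at hz
    set S₁ := x '' (A '' Iio lam)
    set S₂ := x '' (A '' {σ | lam ≤ σ ∧ σ < κ.ord})
    have hP : IsClosed {p : X × X | r * ‖p.1‖ ≤ ‖p.1 + p.2‖} := by
      apply isClosed_le
      · exact continuous_const.mul (continuous_norm.comp continuous_fst)
      · exact continuous_norm.comp (continuous_fst.add continuous_snd)
    have hsub : ratCombos S₁ ×ˢ (Submodule.span ℝ S₂ : Set X)
        ⊆ {p : X × X | r * ‖p.1‖ ≤ ‖p.1 + p.2‖} := by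
      rintro ⟨v, w⟩ ⟨hv, hw⟩
      exact key_estimate Z hnull hr hreg hunc hdisp hlam hv hw
    have hy' : y ∈ closure (ratCombos S₁) := closedSpan_le_ratComboClosure S₁ hy
    have hz' : z ∈ closure (Submodule.span ℝ S₂ : Set X) := by
      have : z ∈ (Submodule.span ℝ S₂).topologicalClosure := hz
      rwa [← Submodule.topologicalClosure_coe]
    have hmem : (y, z) ∈ closure (ratCombos S₁ ×ˢ (Submodule.span ℝ S₂ : Set X)) := by
      rw [closure_prod_eq]
      exact ⟨hy', hz'⟩
    exact hP.closure_subset_iff.2 hsub hmem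

end Constr


theorem stmt3 {X : Type u} [NormedAddCommGroup X] [NormedSpace ℝ X] [CompleteSpace X]
    (κ : Cardinal.{u}) (hreg : κ.IsRegular) (hunc : ℵ₀ < κ)
    (x : Ordinal.{u} → X) (hdisp : IsDispersed x κ.ord)
    (Z : Submodule ℝ (X →L[ℝ] ℝ)) (hnull : IsSigmaNull Z x κ.ord) :
    ((∃ r > (0:ℝ), IsRNorming Z r) →
      ∃ φ : Ordinal.{u} → Ordinal.{u}, StrictMonoOn φ (Set.Iio κ.ord) ∧
        (∀ σ < κ.ord, φ σ < κ.ord) ∧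
        ∃ C : ℝ, IsBasicSeqWithConst (fun σ => x (φ σ)) κ.ord C) ∧
    (IsRNorming Z 1 →
      ∃ φ : Ordinal.{u} → Ordinal.{u}, StrictMonoOn φ (Set.Iio κ.ord) ∧
        (∀ σ < κ.ord, φ σ < κ.ord) ∧
        IsBasicSeqWithConst (fun σ => x (φ σ)) κ.ord 1) := by
  constructor
  · rintro ⟨r, hr0, hr⟩
    obtain ⟨φ, hmono, hlt, hne, hineq⟩ := master Z hnull hr hreg hunc hdisp
    refine ⟨φ, hmono, hlt, max 1 r⁻¹, le_max_left _ _, hne, ?_⟩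
    intro lam hlam y hy z hz
    have h := hineq lam hlam y hy z hz
    have h1 : ‖y‖ ≤ r⁻¹ * ‖y + z‖ := by
      calc ‖y‖ = r⁻¹ * (r * ‖y‖) := by field_simp
        _ ≤ r⁻¹ * ‖y + z‖ := mul_le_mul_of_nonneg_left h (by positivity)
    exact h1.trans (mul_le_mul_of_nonneg_right (le_max_right 1 r⁻¹) (norm_nonneg _))
  · intro hr
    obtain ⟨φ, hmono, hlt, hne, hineq⟩ := master Z hnull hr hreg hunc hdisp
    refine ⟨φ, hmono, hlt, le_refl 1, hne, ?_⟩
    intro lam hlam y hy z hz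
    have h := hineq lam hlam y hy z hz
    linarith
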